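/- Let ν be a probability measure on ℝ giving measure zero to the rationals and invariant under x ↦ -x and x ↦ -1/x. Then the pushforward under C of the measure (1/9) Σ_{i=0}^{8} (h_i)_*ν equals (1/9)(H₀)_*(C_*ν) + (2/9) Σ_{i=1}^{4} (H_i)_*(C_*ν). (Thus, started from a Γ-invariant law, the process W_n = C(X_n) evolves as a Markov chain on [0,1] with steps H_I, where P(I=0)=1/9 and P(I=i)=2/9 for i=1,2,3,4.) -/

import Mathlib

open MeasureTheory ProbabilityTheory Filter
open scoped ENNReal

noncomputable def hMap : Fin 9 → ℝ → ℝ :=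
  ![fun x => -x⁻¹,
    fun x => 1 + x,
    fun x => x - 1,
    fun x => 1 - x⁻¹,
    fun x => -1 - x⁻¹,
    fun x => x / (1 + x),
    fun x => x / (1 - x),
    fun x => -(1 + x)⁻¹,
    fun x => (1 - x)⁻¹]

noncomputable def Cfun (x : ℝ) : ℝ := min |x| |x|⁻¹

noncomputable def HMap : Fin 5 → ℝ → ℝ :=
  ![fun x => x,
    fun x => (1 + x)⁻¹,
    fun x => 1 - x,
    fun x => min (x / (1 - x)) ((1 - x) / x),
    fun x => x / (1 + x)]

noncomputable def cfVal (k : ℕ → ℕ) : ℝ :=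
  limUnder atTop (fun n => (((List.range n).map k).foldr (fun a r => ((a : ℝ) + r)⁻¹) 0))

noncomputable def geomHalf : Measure ℕ :=
  Measure.sum (fun n => ((2 : ℝ≥0∞) ^ (n + 1))⁻¹ • Measure.dirac (n + 1))

noncomputable def bern : Measure ℝ :=
  (2 : ℝ≥0∞)⁻¹ • (Measure.dirac 1 + Measure.dirac (-1))

/-- `μ` is the law of the random continued fraction `[K₁,K₂,…]` with `Kᵢ` i.i.d.
geometric of parameter `1/2` (mass `2⁻ⁿ` at `n ≥ 1`). -/
def IsMuStar (μ : Measure ℝ) : Prop :=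
  ∃ (Ω : Type) (_ : MeasurableSpace Ω) (P : Measure Ω) (K : ℕ → Ω → ℕ),
    IsProbabilityMeasure P ∧ (∀ i, Measurable (K i)) ∧
    iIndepFun K P ∧
    (∀ i, P.map (K i) = geomHalf) ∧
    μ = P.map (fun ω => cfVal (fun i => K i ω))

noncomputable def gaussIter : ℕ → ℝ → ℝ
  | 0, x => x
  | n + 1, x => gaussIter n (Int.fract x⁻¹)

/-- the `n`-th digit (starting at `n = 0`) of the continued fraction expansion of `x ∈ (0,1)`. -/
noncomputable def cfDigit (x : ℝ) (n : ℕ) : ℕ := ⌊(gaussIter n x)⁻¹⌋₊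

/-- the Denjoy–Minkowski function of parameter 1/2. -/
noncomputable def chiHalf (y : ℝ) : ℝ :=
  ∑' n : ℕ, (-1 : ℝ) ^ n *
    (2 : ℝ) ^ (-(⌊y⌋ + ∑ j ∈ Finset.range n, (cfDigit (Int.fract y) j : ℤ)))

/-- Minkowski's question mark function evaluated at `[k₁,k₂,…]`. -/
noncomputable def qmark (k : ℕ → ℕ) : ℝ :=
  2 * ∑' n : ℕ, (-1 : ℝ) ^ n * (2 : ℝ) ^ (-(∑ j ∈ Finset.range (n + 1), (k j : ℤ)))


section stmt4aux

open MeasureTheory Filter Set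

lemma measurable_Cfun : Measurable Cfun := by
  unfold Cfun; fun_prop

lemma Cfun_neg (x : ℝ) : Cfun (-x) = Cfun x := by simp [Cfun]

lemma Cfun_negInv (x : ℝ) : Cfun (-x⁻¹) = Cfun x := by
  simp only [Cfun, abs_neg, abs_inv, inv_inv]
  exact min_comm _ _

lemma Cfun_of_le_one {y : ℝ} (h0 : 0 ≤ y) (h1 : y ≤ 1) : Cfun y = y := by
  rcases eq_or_lt_of_le h0 with h | h
  · simp [Cfun, ← h]
  · rw [Cfun, abs_of_pos h, min_eq_left]
    exact h1.trans (one_le_inv_iff₀.mpr ⟨h, h1⟩)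

lemma Cfun_of_one_le {y : ℝ} (h1 : 1 ≤ y) : Cfun y = y⁻¹ := by
  have h0 : (0:ℝ) < y := lt_of_lt_of_le one_pos h1
  rw [Cfun, abs_of_pos h0, min_eq_right]
  exact le_trans ((inv_le_one₀ h0).mpr h1) h1

lemma regA : ∀ x ∈ Set.Ioo (0:ℝ) 1, Cfun (1 + x) = (HMap 1 ∘ Cfun) x := by
  rintro x ⟨h0, h1⟩
  have e1 : Cfun x = x := Cfun_of_le_one h0.le h1.le
  have e2 : Cfun (1 + x) = (1 + x)⁻¹ := Cfun_of_one_le (by linarith)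
  simp only [Function.comp, e1, e2, HMap]
  norm_num

lemma regB : ∀ x ∈ Set.Ioi (1:ℝ), Cfun (1 + x) = (HMap 4 ∘ Cfun) x := by
  intro x hx
  simp only [Set.mem_Ioi] at hx
  have e1 : Cfun x = x⁻¹ := Cfun_of_one_le hx.le
  have e2 : Cfun (1 + x) = (1 + x)⁻¹ := Cfun_of_one_le (by linarith)
  show Cfun (1 + x) = Cfun x / (1 + Cfun x)
  simp only [Function.comp, e1, e2, HMap]
  norm_num
  rw [eq_comm]
  have hx0 : x ≠ 0 := by positivity
  have hx1 : 1 + x ≠ 0 := by positivity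
  field_simp
  try ring

lemma regA' : ∀ x ∈ Set.Ioo (-1:ℝ) 0, Cfun (1 + x) = (HMap 2 ∘ Cfun) x := by
  rintro x ⟨h0, h1⟩
  have e1 : Cfun x = -x := by
    rw [← Cfun_neg x]; exact Cfun_of_le_one (by linarith) (by linarith)
  have e2 : Cfun (1 + x) = 1 + x := Cfun_of_le_one (by linarith) (by linarith)
  show Cfun (1 + x) = 1 - Cfun x
  simp only [Function.comp, e1, e2, HMap]
  norm_num

lemma regB' : ∀ x ∈ Set.Iio (-1:ℝ), Cfun (1 + x) = (HMap 3 ∘ Cfun) x := by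
  intro x hx
  simp only [Set.mem_Iio] at hx
  have hx0 : -x ≠ (0:ℝ) := by intro h; linarith
  have hx1 : -(1 + x) ≠ 0 := by intro h; linarith
  have hinvlt : (-x)⁻¹ < 1 := by
    rw [inv_lt_one_iff₀]; right; linarith
  have hx2 : 1 - (-x)⁻¹ ≠ 0 := by intro h; nlinarith
  have e1 : Cfun x = (-x)⁻¹ := by
    rw [← Cfun_neg x]; exact Cfun_of_one_le (by linarith)
  have e2 : Cfun (1 + x) = min (-(1+x)) (-(1+x))⁻¹ := by
    rw [← Cfun_neg (1 + x), Cfun, abs_of_pos (by linarith)]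
  have key1 : (-x)⁻¹ / (1 - (-x)⁻¹) = (-(1+x))⁻¹ := by
    field_simp
    ring_nf
    rw [mul_inv_cancel₀ (neg_ne_zero.mp hx0)]
    ring
  have key2 : (1 - (-x)⁻¹) / (-x)⁻¹ = -(1+x) := by
    rw [div_eq_mul_inv, inv_inv, sub_mul, one_mul, inv_mul_cancel₀ hx0]
    ring
  show Cfun (1 + x) = min ((Cfun x) / (1 - Cfun x)) ((1 - Cfun x) / (Cfun x))
  rw [e1, e2, key1, key2, min_comm]

end stmt4aux

theorem stmt4 (ν : Measure ℝ) [IsProbabilityMeasure ν]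
    (hrat : ν {x : ℝ | ¬ Irrational x} = 0)
    (hneg : ν.map (fun x => -x) = ν)
    (hinv : ν.map (fun x => -x⁻¹) = ν) :
    ((9 : ℝ≥0∞)⁻¹ • ∑ i : Fin 9, ν.map (hMap i)).map Cfun =
      (9 : ℝ≥0∞)⁻¹ • (ν.map Cfun).map (HMap 0) +
        (2 / 9 : ℝ≥0∞) • ∑ i : Fin 4, (ν.map Cfun).map (HMap i.succ) := by
  classical
  have hC : Measurable Cfun := measurable_Cfun
  have hneg' : Measurable (fun x : ℝ => -x) := measurable_neg
  have hg : Measurable (fun x : ℝ => -x⁻¹) := measurable_inv.neg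
  have hCh1 : Measurable (fun x : ℝ => Cfun (1 + x)) := hC.comp (by fun_prop)
  have mh : ∀ i : Fin 9, Measurable (hMap i) := by
    intro i
    fin_cases i
    · show Measurable fun x : ℝ => -x⁻¹; fun_prop
    · show Measurable fun x : ℝ => 1 + x; fun_prop
    · show Measurable fun x : ℝ => x - 1; fun_prop
    · show Measurable fun x : ℝ => 1 - x⁻¹; fun_prop
    · show Measurable fun x : ℝ => -1 - x⁻¹; fun_prop
    · show Measurable fun x : ℝ => x / (1 + x); fun_prop
    · show Measurable fun x : ℝ => x / (1 - x); fun_prop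
    · show Measurable fun x : ℝ => -(1 + x)⁻¹; fun_prop
    · show Measurable fun x : ℝ => (1 - x)⁻¹; fun_prop
  have mH : ∀ i : Fin 5, Measurable (HMap i) := by
    intro i
    fin_cases i
    · show Measurable fun x : ℝ => x; fun_prop
    · show Measurable fun x : ℝ => (1 + x)⁻¹; fun_prop
    · show Measurable fun x : ℝ => 1 - x; fun_prop
    · show Measurable fun x : ℝ => min (x / (1 - x)) ((1 - x) / x); fun_prop
    · show Measurable fun x : ℝ => x / (1 + x); fun_prop
  have hirr : ∀ᵐ x ∂ν, Irrational x := by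
    rw [ae_iff]
    simpa using hrat
  -- the four regions
  set A : Set ℝ := Set.Ioo 0 1 with hA
  set B : Set ℝ := Set.Ioi 1 with hB
  set A' : Set ℝ := Set.Ioo (-1) 0 with hA'
  set B' : Set ℝ := Set.Iio (-1) with hB'
  set κ : Measure ℝ := (ν.restrict A).map Cfun with hκ
  -- pushforwards of the restricted measures all coincide
  have hA'κ : (ν.restrict A').map Cfun = κ := by
    have hpre : (fun x : ℝ => -x) ⁻¹' A' = A := by
      ext x
      simp only [Set.mem_preimage, hA, hA', Set.mem_Ioo]
      constructor <;> rintro ⟨h1, h2⟩ <;> constructor <;> linarith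
    have h1 : ν.restrict A' = Measure.map (fun x : ℝ => -x) (ν.restrict A) := by
      conv_lhs => rw [← hneg]
      rw [Measure.restrict_map hneg' measurableSet_Ioo, hpre]
    rw [h1, Measure.map_map hC hneg']
    congr 1
    funext x
    exact Cfun_neg x
  have hB'κ : (ν.restrict B').map Cfun = κ := by
    have hpre : (fun x : ℝ => -x⁻¹) ⁻¹' B' = A := by
      ext x
      simp only [Set.mem_preimage, hA, hB', Set.mem_Iio, Set.mem_Ioo, neg_lt_neg_iff]
      exact one_lt_inv_iff₀
    have h1 : ν.restrict B' = Measure.map (fun x : ℝ => -x⁻¹) (ν.restrict A) := by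
      conv_lhs => rw [← hinv]
      rw [Measure.restrict_map hg measurableSet_Iio, hpre]
    rw [h1, Measure.map_map hC hg]
    congr 1
    funext x
    exact Cfun_negInv x
  have hBκ : (ν.restrict B).map Cfun = κ := by
    have hpre : (fun x : ℝ => -x⁻¹) ⁻¹' B = A' := by
      ext x
      simp only [Set.mem_preimage, hA', hB, Set.mem_Ioi, Set.mem_Ioo]
      rw [show -x⁻¹ = (-x)⁻¹ by rw [inv_neg], one_lt_inv_iff₀]
      constructor <;> rintro ⟨h1, h2⟩ <;> constructor <;> linarith
    have h1 : ν.restrict B = Measure.map (fun x : ℝ => -x⁻¹) (ν.restrict A') := by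
      conv_lhs => rw [← hinv]
      rw [Measure.restrict_map hg measurableSet_Ioi, hpre]
    rw [h1, Measure.map_map hC hg]
    rw [show Cfun ∘ (fun x : ℝ => -x⁻¹) = Cfun from funext Cfun_negInv]
    exact hA'κ
  -- decomposition of ν
  have dAB : Disjoint A B := by
    rw [Set.disjoint_left]; rintro x ⟨h1, h2⟩ h3
    rw [hB, Set.mem_Ioi] at h3; linarith
  have dABA' : Disjoint (A ∪ B) A' := by
    rw [Set.disjoint_left]; rintro x hx ⟨h1, h2⟩
    rcases hx with ⟨h3, h4⟩ | h3
    · linarith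
    · rw [hB, Set.mem_Ioi] at h3; linarith
  have dABA'B' : Disjoint (A ∪ B ∪ A') B' := by
    rw [Set.disjoint_left]; rintro x hx h5
    rw [hB', Set.mem_Iio] at h5
    rcases hx with (⟨h3, h4⟩ | h3) | ⟨h3, h4⟩
    · linarith
    · rw [hB, Set.mem_Ioi] at h3; linarith
    · linarith
  have hdecomp : ν.restrict A + ν.restrict B + ν.restrict A' + ν.restrict B' = ν := by
    rw [← Measure.restrict_union dAB measurableSet_Ioi,
        ← Measure.restrict_union dABA' measurableSet_Ioo,
        ← Measure.restrict_union dABA'B' measurableSet_Iio]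
    apply Measure.restrict_eq_self_of_ae_mem
    filter_upwards [hirr] with x hx
    have h0 : x ≠ 0 := by simpa using hx.ne_int 0
    have h1 : x ≠ 1 := by simpa using hx.ne_int 1
    have hm1 : x ≠ -1 := by simpa using hx.ne_int (-1)
    simp only [Set.mem_union, hA, hB, hA', hB', Set.mem_Ioo, Set.mem_Ioi, Set.mem_Iio]
    rcases lt_trichotomy x 0 with h | h | h
    · rcases lt_trichotomy x (-1) with h' | h' | h'
      · tauto
      · exact absurd h' hm1
      · tauto
    · exact absurd h h0
    · rcases lt_trichotomy x 1 with h' | h' | h'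
      · tauto
      · exact absurd h' h1
      · tauto
  set μ : Measure ℝ := ν.map Cfun with hμ
  have hμ4 : μ = κ + κ + κ + κ := by
    rw [hμ, ← hdecomp, Measure.map_add _ _ hC, Measure.map_add _ _ hC,
        Measure.map_add _ _ hC, hA'κ, hB'κ, hBκ]
  -- the key pushforward identity
  set T : Measure ℝ := ν.map (fun x => Cfun (1 + x)) with hT
  have hTsum : T = κ.map (HMap 1) + κ.map (HMap 4) + κ.map (HMap 2) + κ.map (HMap 3) := by
    have piece : ∀ (s : Set ℝ) (_ : MeasurableSet s) (j : Fin 5),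
        (∀ x ∈ s, Cfun (1 + x) = (HMap j ∘ Cfun) x) →
        (ν.restrict s).map (fun x => Cfun (1 + x)) = ((ν.restrict s).map Cfun).map (HMap j) := by
      intro s hs j hsj
      rw [Measure.map_congr (ae_restrict_of_forall_mem hs hsj), Measure.map_map (mH j) hC]
    rw [hT]
    conv_lhs => rw [← hdecomp]
    rw [Measure.map_add _ _ hCh1, Measure.map_add _ _ hCh1, Measure.map_add _ _ hCh1,
        piece A measurableSet_Ioo 1 regA, piece B measurableSet_Ioi 4 regB,
        piece A' measurableSet_Ioo 2 regA', piece B' measurableSet_Iio 3 regB',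
        hA'κ, hB'κ, hBκ]
  -- each of the eight non-identity terms pushes to T
  have e1 : (ν.map (hMap 1)).map Cfun = T := by
    rw [Measure.map_map hC (mh 1)]; rfl
  have e2 : (ν.map (hMap 2)).map Cfun = T := by
    rw [Measure.map_map hC (mh 2)]
    have : Cfun ∘ hMap 2 = (fun x => Cfun (1 + x)) ∘ (fun x : ℝ => -x) := by
      funext x
      show Cfun (x - 1) = Cfun (1 + -x)
      rw [show (1:ℝ) + -x = -(x - 1) by ring, Cfun_neg]
    rw [this, ← Measure.map_map hCh1 hneg', hneg, hT]
  have e3 : (ν.map (hMap 3)).map Cfun = T := by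
    rw [Measure.map_map hC (mh 3)]
    have : Cfun ∘ hMap 3 = (fun x => Cfun (1 + x)) ∘ (fun x : ℝ => -x⁻¹) := by
      funext x
      show Cfun (1 - x⁻¹) = Cfun (1 + -x⁻¹)
      ring_nf
    rw [this, ← Measure.map_map hCh1 hg, hinv, hT]
  have e4 : (ν.map (hMap 4)).map Cfun = T := by
    rw [Measure.map_map hC (mh 4)]
    have : Cfun ∘ hMap 4 = (Cfun ∘ hMap 2) ∘ (fun x : ℝ => -x⁻¹) := by
      funext x
      show Cfun (-1 - x⁻¹) = Cfun (-x⁻¹ - 1)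
      ring_nf
    rw [this, ← Measure.map_map (hC.comp (mh 2)) hg, hinv, ← Measure.map_map hC (mh 2), e2]
  have e7 : (ν.map (hMap 7)).map Cfun = T := by
    rw [Measure.map_map hC (mh 7)]
    have : Cfun ∘ hMap 7 = fun x => Cfun (1 + x) := by
      funext x
      exact Cfun_negInv (1 + x)
    rw [this, hT]
  have e8 : (ν.map (hMap 8)).map Cfun = T := by
    rw [Measure.map_map hC (mh 8)]
    have : Cfun ∘ hMap 8 = Cfun ∘ hMap 2 := by
      funext x
      show Cfun (1 - x)⁻¹ = Cfun (x - 1)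
      rw [show ((1:ℝ) - x)⁻¹ = -(x - 1)⁻¹ by rw [← inv_neg]; ring_nf, Cfun_negInv]
    rw [this, ← Measure.map_map hC (mh 2), e2]
  have e5 : (ν.map (hMap 5)).map Cfun = T := by
    rw [Measure.map_map hC (mh 5)]
    have hae : (Cfun ∘ hMap 5) =ᵐ[ν] (Cfun ∘ hMap 4) := by
      filter_upwards [hirr] with x hx
      have hx0 : x ≠ 0 := by simpa using hx.ne_int 0
      have hxm1 : x ≠ -1 := by simpa using hx.ne_int (-1)
      show Cfun (x / (1 + x)) = Cfun (-1 - x⁻¹)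
      have h1x : (1:ℝ) + x ≠ 0 := fun h => hxm1 (by linarith)
      rw [show x / (1 + x) = -(-1 - x⁻¹)⁻¹ by
            rw [show (-1 - x⁻¹ : ℝ) = -((1+x)/x) by field_simp; ring, inv_neg, neg_neg, inv_div],
          Cfun_negInv]
    rw [Measure.map_congr hae, ← Measure.map_map hC (mh 4), e4]
  have e6 : (ν.map (hMap 6)).map Cfun = T := by
    rw [Measure.map_map hC (mh 6)]
    have hae : (Cfun ∘ hMap 6) =ᵐ[ν] (Cfun ∘ hMap 3) := by
      filter_upwards [hirr] with x hx
      have hx0 : x ≠ 0 := by simpa using hx.ne_int 0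
      have hx1 : x ≠ 1 := by simpa using hx.ne_int 1
      show Cfun (x / (1 - x)) = Cfun (1 - x⁻¹)
      have h1x : (1:ℝ) - x ≠ 0 := fun h => hx1 (by linarith)
      rw [show x / (1 - x) = -(1 - x⁻¹)⁻¹ by
            rw [show (1 - x⁻¹ : ℝ) = -((1-x)/x) by field_simp; ring, inv_neg, neg_neg, inv_div],
          Cfun_negInv]
    rw [Measure.map_congr hae, ← Measure.map_map hC (mh 3), e3]
  have e0 : (ν.map (hMap 0)).map Cfun = μ := by
    rw [Measure.map_map hC (mh 0), show Cfun ∘ hMap 0 = Cfun from funext Cfun_negInv, hμ]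
  -- assemble
  have hHj : ∀ j : Fin 5, μ.map (HMap j) = κ.map (HMap j) + κ.map (HMap j) +
      κ.map (HMap j) + κ.map (HMap j) := by
    intro j
    rw [hμ4, Measure.map_add _ _ (mH j), Measure.map_add _ _ (mH j), Measure.map_add _ _ (mH j)]
  have hH0 : μ.map (HMap 0) = μ := by
    show μ.map (fun x => x) = μ
    exact Measure.map_id'
  have key : (∑ i : Fin 9, ν.map (hMap i)).map Cfun =
      μ.map (HMap 0) + (2 : ℝ≥0∞) • ∑ i : Fin 4, μ.map (HMap i.succ) := by
    have expand : (∑ i : Fin 9, ν.map (hMap i)).map Cfun =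
        ∑ i : Fin 9, (ν.map (hMap i)).map Cfun := by
      simp only [Fin.sum_univ_succ, Finset.univ_unique, Fin.default_eq_zero, Finset.sum_singleton]
      rw [Measure.map_add _ _ hC, Measure.map_add _ _ hC, Measure.map_add _ _ hC,
          Measure.map_add _ _ hC, Measure.map_add _ _ hC, Measure.map_add _ _ hC,
          Measure.map_add _ _ hC, Measure.map_add _ _ hC]
    rw [expand]
    have l : ∑ i : Fin 9, (ν.map (hMap i)).map Cfun =
        μ + T + T + T + T + T + T + T + T := by
      rw [Fin.sum_univ_succ, Fin.sum_univ_eight]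
      norm_num
      simp only [show (Fin.succ 2 : Fin 9) = 3 from rfl, show (Fin.succ 3 : Fin 9) = 4 from rfl,
        show (Fin.succ 4 : Fin 9) = 5 from rfl, show (Fin.succ 5 : Fin 9) = 6 from rfl,
        show (Fin.succ 6 : Fin 9) = 7 from rfl, show (Fin.succ 7 : Fin 9) = 8 from rfl]
      simp only [e0, e1, e2, e3, e4, e5, e6, e7, e8]
      abel
    have r : ∑ i : Fin 4, μ.map (HMap i.succ) =
        μ.map (HMap 1) + μ.map (HMap 2) + μ.map (HMap 3) + μ.map (HMap 4) := by
      rw [Fin.sum_univ_four]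
      abel
    rw [l, r, hH0, hHj 1, hHj 2, hHj 3, hHj 4, hTsum, two_smul]
    abel
  calc ((9 : ℝ≥0∞)⁻¹ • ∑ i : Fin 9, ν.map (hMap i)).map Cfun
      = (9 : ℝ≥0∞)⁻¹ • (∑ i : Fin 9, ν.map (hMap i)).map Cfun := by
        rw [Measure.map_smul]
    _ = (9 : ℝ≥0∞)⁻¹ • (μ.map (HMap 0) + (2 : ℝ≥0∞) • ∑ i : Fin 4, μ.map (HMap i.succ)) := by
        rw [key]
    _ = (9 : ℝ≥0∞)⁻¹ • (ν.map Cfun).map (HMap 0) +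
        (2 / 9 : ℝ≥0∞) • ∑ i : Fin 4, (ν.map Cfun).map (HMap i.succ) := by
        have hsc : (9:ℝ≥0∞)⁻¹ * 2 = 2/9 := (ENNReal.div_eq_inv_mul ..).symm
        rw [smul_add, smul_smul, hsc]
        try rfl
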